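/- For every R ∈ SO(3), ‖Υ(R)‖² = 4(1 − ‖R‖_I)‖R‖_I, where ‖·‖ is the Euclidean norm on ℝ³. -/

import Mathlib

open Matrix Filter

noncomputable section

/-- Skew-symmetric matrix of a vector: `skew ω *ᵥ v = ω ×₃ v`. -/
def skew (ω : Fin 3 → ℝ) : Matrix (Fin 3) (Fin 3) ℝ :=
  !![0, -ω 2, ω 1; ω 2, 0, -ω 0; -ω 1, ω 0, 0]

/-- Inverse of `skew` on skew-symmetric matrices. -/
def vex (M : Matrix (Fin 3) (Fin 3) ℝ) : Fin 3 → ℝ :=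
  ![M 2 1, M 0 2, M 1 0]

/-- Anti-symmetric projection `P_a(M) = (M - Mᵀ)/2`. -/
def Pa (M : Matrix (Fin 3) (Fin 3) ℝ) : Matrix (Fin 3) (Fin 3) ℝ :=
  (1 / 2 : ℝ) • (M - Mᵀ)

/-- `Υ(M) = vex (P_a M)`. -/
def Upsilon (M : Matrix (Fin 3) (Fin 3) ℝ) : Fin 3 → ℝ := vex (Pa M)

/-- `R ∈ SO(3)`. -/
def SO3 (R : Matrix (Fin 3) (Fin 3) ℝ) : Prop :=
  R * Rᵀ = 1 ∧ Rᵀ * R = 1 ∧ R.det = 1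

/-- `‖R‖_I = Tr(I₃ - R)/4`. -/
def normI (R : Matrix (Fin 3) (Fin 3) ℝ) : ℝ := Matrix.trace (1 - R) / 4

/-- Squared Euclidean norm of a vector of `ℝ³`. -/
def sqnorm (v : Fin 3 → ℝ) : ℝ := ∑ i, v i ^ 2

theorem sqnorm_Upsilon_eq (R : Matrix (Fin 3) (Fin 3) ℝ) (hR : SO3 R) :
    sqnorm (Upsilon R) = 4 * (1 - normI R) * normI R := by
  obtain ⟨h1, h2, h3⟩ := hR
  have hadj : R.adjugate = Rᵀ := by
    have hinv : Invertible R := invertibleOfRightInverse R _ h1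
    have : R⁻¹ = Rᵀ := inv_eq_right_inv h1
    rw [← this, Matrix.inv_def, h3]
    simp
  have hc := fun i j => congrFun (congrFun (R.adjugate_fin_three ▸ hadj) i) j
  have hc0 := hc 0 0
  have hc1 := hc 1 1
  have hc2 := hc 2 2
  simp [Matrix.transpose_apply] at hc0 hc1 hc2
  have hr := fun i j => congrFun (congrFun h1 i) j
  have hr0 := hr 0 0
  have hr1 := hr 1 1
  have hr2 := hr 2 2
  simp [Matrix.mul_apply, Fin.sum_univ_three, Matrix.one_apply] at hr0 hr1 hr2
  simp only [sqnorm, Upsilon, vex, Pa, normI, Matrix.trace_fin_three, Fin.sum_univ_three,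
    Matrix.sub_apply, Matrix.smul_apply, Matrix.transpose_apply, Matrix.one_apply_eq,
    Matrix.cons_val_zero, Matrix.cons_val_one, Matrix.head_cons, smul_eq_mul,
    Matrix.cons_val_two, Matrix.tail_cons]
  nlinarith [hr0, hr1, hr2, hc0, hc1, hc2]
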